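/- Let ε > 0. If p_j · (b_j − a_j) ≤ 4ε for every j ∈ {1, …, n}, then sup_{s ∈ (a, b]} |f̃(s) − f_X(s)| ≤ ε; in particular, if p_j · (b_j − a_j) ≤ 8ε for every j ∈ {1, …, n}, then sup_{s ∈ (a, b]} |f̃(s) − f_X(s)| ≤ 2ε. -/

import Mathlib

open MeasureTheory

/-- The `j`-th region of the partition of `ℝ` induced by points `q 0 < q 1 < ⋯ < q n`:
`I_0 = (−∞, q 0]`, `I_j = (q (j−1), q j]` for `1 ≤ j ≤ n`, and `I_{n+1} = (q n, ∞)`. -/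
noncomputable def seg (q : ℕ → ℝ) (n j : ℕ) : Set ℝ :=
  if j = 0 then Set.Iic (q 0)
  else if j ≤ n then Set.Ioc (q (j - 1)) (q j)
  else Set.Ioi (q n)

/-- `p_j = P(X ∈ I_j)`. -/
noncomputable def segProb {Ω : Type*} [MeasurableSpace Ω]
    (P : Measure Ω) (X : Ω → ℝ) (q : ℕ → ℝ) (n j : ℕ) : ℝ :=
  (P {ω | X ω ∈ seg q n j}).toReal

/-- `μ_j = E[X | X ∈ I_j] = E[1_{X ∈ I_j} X] / p_j`. -/
noncomputable def segMean {Ω : Type*} [MeasurableSpace Ω]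
    (P : Measure Ω) (X : Ω → ℝ) (q : ℕ → ℝ) (n j : ℕ) : ℝ :=
  (∫ ω in {ω | X ω ∈ seg q n j}, X ω ∂P) / segProb P X q n j

/-- The induced piecewise linear approximation `f̃(s) = ∑_{j=0}^{n+1} p_j · min(s, μ_j)`. -/
noncomputable def ftilde {Ω : Type*} [MeasurableSpace Ω]
    (P : Measure Ω) (X : Ω → ℝ) (q : ℕ → ℝ) (n : ℕ) (s : ℝ) : ℝ :=
  ∑ j ∈ Finset.range (n + 2), segProb P X q n j * min s (segMean P X q n j)

lemma seg_measurable (q : ℕ → ℝ) (n j : ℕ) : MeasurableSet (seg q n j) := by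
  unfold seg; split_ifs
  · exact measurableSet_Iic
  · exact measurableSet_Ioc
  · exact measurableSet_Ioi

lemma q_le {q : ℕ → ℝ} {n : ℕ} (hmono : ∀ i < n, q i < q (i + 1)) :
    ∀ {i m : ℕ}, i ≤ m → m ≤ n → q i ≤ q m := by
  intro i m him hmn
  induction m with
  | zero => interval_cases i; exact le_rfl
  | succ m ih =>
    rcases Nat.lt_or_ge i (m + 1) with h | h
    · exact (ih (Nat.lt_succ_iff.mp h) (by omega)).trans (hmono m (by omega)).le
    · have : i = m + 1 := by omega
      subst this; exact le_rfl

lemma seg_cover {q : ℕ → ℝ} {n : ℕ} (x : ℝ) : ∃ j < n + 2, x ∈ seg q n j := by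
  by_cases h0 : x ≤ q 0
  · exact ⟨0, by omega, by simp [seg, h0]⟩
  by_cases hn' : q n < x
  · refine ⟨n + 1, by omega, ?_⟩
    simp [seg, hn']
  push_neg at h0 hn'
  have key : ∀ m : ℕ, m ≤ n → x ≤ q m → ∃ j, 1 ≤ j ∧ j ≤ n ∧ q (j - 1) < x ∧ x ≤ q j := by
    intro m
    induction m with
    | zero => intro _ h; exact absurd h (not_le.mpr h0)
    | succ m ih =>
      intro hmn hxm
      by_cases hq : q m < x
      · exact ⟨m + 1, by omega, hmn, by simpa using hq, hxm⟩
      · exact ih (by omega) (not_lt.mp hq)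
  obtain ⟨j, hj1, hjn, hja, hjb⟩ := key n le_rfl hn'
  exact ⟨j, by omega, by rw [seg, if_neg (by omega : ¬ j = 0), if_pos hjn]; exact ⟨hja, hjb⟩⟩

lemma seg_disjoint {q : ℕ → ℝ} {n : ℕ} (hmono : ∀ i < n, q i < q (i + 1))
    {i j : ℕ} (hi : i < j) (hj : j ≤ n + 1) : Disjoint (seg q n i) (seg q n j) := by
  have hsub1 : seg q n i ⊆ Set.Iic (q i) := by
    unfold seg; split_ifs with h1 h2
    · subst h1; exact subset_rfl
    · exact Set.Ioc_subset_Iic_self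
    · omega
  have hsub2 : seg q n j ⊆ Set.Ioi (q (j - 1)) := by
    unfold seg; split_ifs with h1 h2
    · omega
    · exact Set.Ioc_subset_Ioi_self
    · have : j - 1 = n := by omega
      rw [this]
  have hle : q i ≤ q (j - 1) := q_le hmono (by omega) (by omega)
  exact Set.disjoint_of_subset hsub1 hsub2 (by
    rw [Set.disjoint_left]
    intro x hx1 hx2
    exact absurd (Set.mem_Iic.mp hx1) (not_le.mpr (lt_of_le_of_lt hle (Set.mem_Ioi.mp hx2))))

lemma term_eq_left {Ω : Type*} [MeasurableSpace Ω] (P : Measure Ω) [IsProbabilityMeasure P]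
    (X : Ω → ℝ) (hXm : Measurable X) (hX : Integrable X P) (q : ℕ → ℝ) (n j : ℕ) (s : ℝ)
    (hp : 0 < segProb P X q n j) (hle : ∀ x ∈ seg q n j, x ≤ s) :
    segProb P X q n j * min s (segMean P X q n j)
      = ∫ ω in {ω | X ω ∈ seg q n j}, min s (X ω) ∂P := by
  set A := {ω | X ω ∈ seg q n j} with hA
  have hAm : MeasurableSet A := hXm (seg_measurable q n j)
  have hXA : ∀ ω ∈ A, X ω ≤ s := fun ω hω => hle _ hω
  have h1 : ∫ ω in A, min s (X ω) ∂P = ∫ ω in A, X ω ∂P :=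
    setIntegral_congr_fun hAm (fun ω hω => min_eq_right (hXA ω hω))
  have hJs : ∫ ω in A, X ω ∂P ≤ segProb P X q n j * s := by
    have h := setIntegral_mono_on hX.integrableOn (integrable_const s).integrableOn hAm hXA
    rwa [setIntegral_const, smul_eq_mul] at h
  have hμ : segMean P X q n j ≤ s := by
    rw [segMean, div_le_iff₀ hp]; linarith [hJs]
  rw [h1, min_eq_right hμ, segMean, mul_div_cancel₀ _ hp.ne']

lemma term_eq_right {Ω : Type*} [MeasurableSpace Ω] (P : Measure Ω) [IsProbabilityMeasure P]
    (X : Ω → ℝ) (hXm : Measurable X) (hX : Integrable X P) (q : ℕ → ℝ) (n j : ℕ) (s : ℝ)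
    (hp : 0 < segProb P X q n j) (hge : ∀ x ∈ seg q n j, s ≤ x) :
    segProb P X q n j * min s (segMean P X q n j)
      = ∫ ω in {ω | X ω ∈ seg q n j}, min s (X ω) ∂P := by
  set A := {ω | X ω ∈ seg q n j} with hA
  have hAm : MeasurableSet A := hXm (seg_measurable q n j)
  have hXA : ∀ ω ∈ A, s ≤ X ω := fun ω hω => hge _ hω
  have h1 : ∫ ω in A, min s (X ω) ∂P = segProb P X q n j * s := by
    rw [setIntegral_congr_fun hAm (fun ω hω => min_eq_left (hXA ω hω)),
      setIntegral_const, smul_eq_mul]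
    rfl
  have hJs : segProb P X q n j * s ≤ ∫ ω in A, X ω ∂P := by
    have h := setIntegral_mono_on (integrable_const s).integrableOn hX.integrableOn hAm hXA
    rwa [setIntegral_const, smul_eq_mul] at h
  have hμ : s ≤ segMean P X q n j := by
    rw [segMean, le_div_iff₀ hp]; linarith [hJs]
  rw [h1, min_eq_left hμ]

lemma chord_bound {Ω : Type*} [MeasurableSpace Ω] (P : Measure Ω) [IsProbabilityMeasure P]
    (X : Ω → ℝ) (hX : Integrable X P) (A : Set Ω) (hAm : MeasurableSet A)
    (u v s : ℝ) (huv : u < v) (hsu : u < s) (hsv : s ≤ v)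
    (hmem : ∀ ω ∈ A, u < X ω ∧ X ω ≤ v) (hp : 0 < (P A).toReal) :
    |(P A).toReal * min s ((∫ ω in A, X ω ∂P) / (P A).toReal) - ∫ ω in A, min s (X ω) ∂P|
      ≤ (P A).toReal * (v - u) / 4 := by
  set p := (P A).toReal with hpdef
  set J := ∫ ω in A, X ω ∂P with hJdef
  set I := ∫ ω in A, min s (X ω) ∂P with hIdef
  set μ := J / p with hμdef
  have hd : (0:ℝ) < v - u := by linarith
  set cc := (s - u) / (v - u) with hccdef
  have hcc0 : 0 ≤ cc := div_nonneg (by linarith) hd.le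
  have hcc1 : cc ≤ 1 := (div_le_one hd).mpr (by linarith)
  have hccd : cc * (v - u) = s - u := div_mul_cancel₀ _ hd.ne'
  have hfint : Integrable (fun ω => min s (X ω)) P := by
    have h := (integrable_const (μ := P) s).inf hX
    simpa [Pi.inf_def] using h
  have hIs : I ≤ p * s := by
    have h := setIntegral_mono_on hfint.integrableOn (integrable_const s).integrableOn hAm
      (fun ω _ => min_le_left s (X ω))
    rwa [setIntegral_const, smul_eq_mul] at h
  have hIJ : I ≤ J := setIntegral_mono_on hfint.integrableOn hX.integrableOn hAm
    (fun ω _ => min_le_right s (X ω))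
  have hJu : p * u ≤ J := by
    have h := setIntegral_mono_on (integrable_const u).integrableOn hX.integrableOn hAm
      (fun ω hω => (hmem ω hω).1.le)
    rwa [setIntegral_const, smul_eq_mul] at h
  have hgint : IntegrableOn (fun ω => u + cc * (X ω - u)) A P := by
    exact ((integrable_const u).integrableOn.add
      (((hX.integrableOn.sub (integrable_const u).integrableOn)).const_mul cc))
  have hLB : p * u + cc * (J - p * u) ≤ I := by
    have hpt : ∀ ω ∈ A, u + cc * (X ω - u) ≤ min s (X ω) := by
      intro ω hω
      obtain ⟨hx1, hx2⟩ := hmem ω hω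
      refine le_min ?_ ?_
      · nlinarith [mul_le_mul_of_nonneg_left (sub_le_sub_right hx2 u) hcc0]
      · nlinarith [mul_le_mul_of_nonneg_right (sub_nonneg.mpr hx1.le) (sub_nonneg.mpr hcc1)]
    have h := setIntegral_mono_on hgint hfint.integrableOn hAm hpt
    have heval : ∫ ω in A, (u + cc * (X ω - u)) ∂P = p * u + cc * (J - p * u) := by
      have h1 : ∀ ω, u + cc * (X ω - u) = u * (1 - cc) + cc * X ω := fun ω => by ring
      simp only [h1]
      rw [integral_add (integrable_const _).integrableOn (hX.integrableOn.const_mul cc),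
        setIntegral_const, integral_const_mul]
      simp only [smul_eq_mul]
      rw [measureReal_def, ← hpdef, ← hJdef]
      ring
    rwa [heval] at h
  have hJμ : J = p * μ := by rw [hμdef]; field_simp
  have hμu : u ≤ μ := by rw [hμdef, le_div_iff₀ hp]; linarith
  set m := min s μ with hmdef
  have hmu : u ≤ m := le_min hsu.le hμu
  have hms : m ≤ s := min_le_left _ _
  have hmμ : m ≤ μ := min_le_right _ _
  have hnonneg : 0 ≤ p * m - I := by
    have : I ≤ p * m := by
      have h1 : I ≤ min (p * s) (p * μ) := le_min hIs (hJμ ▸ hIJ)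
      calc I ≤ min (p * s) (p * μ) := h1
        _ = p * min s μ := by rw [mul_min_of_nonneg _ _ hp.le]
    linarith
  rw [abs_of_nonneg hnonneg]
  have haux : m - u - cc * (μ - u) ≤ (v - u) / 4 := by
    have s1 : cc * (m - u) ≤ cc * (μ - u) :=
      mul_le_mul_of_nonneg_left (by linarith) hcc0
    have s2 : (m - u) * (v - s) ≤ (s - u) * (v - s) :=
      mul_le_mul_of_nonneg_right (by linarith) (by linarith)
    have s3 : (s - u) * (v - s) ≤ (v - u) ^ 2 / 4 := by nlinarith [sq_nonneg ((s - u) - (v - s))]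
    nlinarith [s1, s2, s3, hd, hccd, mul_pos hd hd]
  calc p * m - I ≤ p * m - (p * u + cc * (J - p * u)) := by linarith
    _ = p * (m - u - cc * (μ - u)) := by rw [hJμ]; ring
    _ ≤ p * ((v - u) / 4) := mul_le_mul_of_nonneg_left haux hp.le
    _ = p * (v - u) / 4 := by ring

lemma key_bound {Ω : Type*} [MeasurableSpace Ω]
    (P : Measure Ω) [IsProbabilityMeasure P]
    (X : Ω → ℝ) (hXm : Measurable X) (hX : Integrable X P)
    (a b : ℝ) (hab : a < b) (n : ℕ) (hn : 1 ≤ n)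
    (q : ℕ → ℝ) (hq0 : q 0 = a) (hqn : q n = b)
    (hmono : ∀ i < n, q i < q (i + 1))
    (hpos : ∀ j ≤ n + 1, 0 < segProb P X q n j)
    (ε : ℝ) (hε : 0 < ε)
    (h4 : ∀ j, 1 ≤ j → j ≤ n → segProb P X q n j * (q j - q (j - 1)) ≤ 4 * ε)
    (s : ℝ) (hs : s ∈ Set.Ioc a b) :
    |ftilde P X q n s - ∫ ω, min s (X ω) ∂P| ≤ ε := by
  obtain ⟨hsa, hsb⟩ := hs
  set A : ℕ → Set Ω := fun j => {ω | X ω ∈ seg q n j} with hAdef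
  have hAm : ∀ j, MeasurableSet (A j) := fun j => hXm (seg_measurable q n j)
  have hfint : Integrable (fun ω => min s (X ω)) P := by
    have h := (integrable_const (μ := P) s).inf hX
    simpa [Pi.inf_def] using h
  -- locate the segment containing s
  obtain ⟨k, hk2, hkmem⟩ := seg_cover (q := q) (n := n) s
  have hk0 : ¬ k = 0 := by
    intro h; subst h
    simp [seg, hq0] at hkmem
    linarith
  have hkn : k ≤ n := by
    by_contra h
    rw [seg, if_neg hk0, if_neg h] at hkmem
    rw [hqn] at hkmem
    exact absurd hkmem (not_lt.mpr hsb)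
  rw [seg, if_neg hk0, if_pos hkn] at hkmem
  obtain ⟨hks1, hks2⟩ := hkmem
  -- splitting the integral
  have hdisj : Set.Pairwise ↑(Finset.range (n + 2)) (Function.onFun Disjoint A) := by
    intro i hi j hj hij
    simp only [Finset.coe_range, Set.mem_Iio] at hi hj
    rcases lt_or_gt_of_ne hij with h | h
    · exact Disjoint.preimage X (seg_disjoint hmono h (by omega))
    · exact (Disjoint.preimage X (seg_disjoint hmono h (by omega))).symm
  have hcover : (⋃ j ∈ Finset.range (n + 2), A j) = Set.univ := by
    ext ω
    simp only [Set.mem_iUnion, Finset.mem_range, Set.mem_univ, iff_true]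
    obtain ⟨j, hj, hx⟩ := seg_cover (q := q) (n := n) (X ω)
    exact ⟨j, hj, hx⟩
  have hsplit : ∫ ω, min s (X ω) ∂P = ∑ j ∈ Finset.range (n + 2), ∫ ω in A j, min s (X ω) ∂P := by
    have h1 := integral_biUnion_finset (μ := P) (f := fun ω => min s (X ω))
      (Finset.range (n + 2)) (fun i _ => hAm i) hdisj (fun i _ => hfint.integrableOn)
    rwa [hcover, Measure.restrict_univ] at h1
  -- off-segment terms vanish
  have heq : ∀ j ∈ Finset.range (n + 2), j ≠ k →
      segProb P X q n j * min s (segMean P X q n j) - ∫ ω in A j, min s (X ω) ∂P = 0 := by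
    intro j hjr hjk
    have hj2 : j < n + 2 := Finset.mem_range.mp hjr
    have hpj : 0 < segProb P X q n j := hpos j (by omega)
    rw [sub_eq_zero]
    rcases lt_or_gt_of_ne hjk with hlt | hgt
    · apply term_eq_left P X hXm hX q n j s hpj
      intro x hx
      by_cases hj0 : j = 0
      · subst hj0
        simp [seg, hq0] at hx
        linarith
      · have hjn : j ≤ n := by omega
        rw [seg, if_neg hj0, if_pos hjn] at hx
        have hle : q j ≤ q (k - 1) := q_le hmono (by omega) (by omega)
        linarith [hx.2]
    · apply term_eq_right P X hXm hX q n j s hpj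
      intro x hx
      by_cases hjn : j ≤ n
      · rw [seg, if_neg (by omega : ¬ j = 0), if_pos hjn] at hx
        have hle : q k ≤ q (j - 1) := q_le hmono (by omega) (by omega)
        linarith [hx.1]
      · rw [seg, if_neg (by omega : ¬ j = 0), if_neg hjn] at hx
        have hle : q k ≤ q n := q_le hmono hkn le_rfl
        rw [Set.mem_Ioi] at hx
        linarith
  have hmain : ftilde P X q n s - ∫ ω, min s (X ω) ∂P
      = segProb P X q n k * min s (segMean P X q n k) - ∫ ω in A k, min s (X ω) ∂P := by
    rw [ftilde, hsplit, ← Finset.sum_sub_distrib]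
    exact Finset.sum_eq_single_of_mem k (Finset.mem_range.mpr (by omega)) heq
  rw [hmain]
  -- the remaining segment
  have hmem : ∀ ω ∈ A k, q (k - 1) < X ω ∧ X ω ≤ q k := by
    intro ω hω
    have hx : X ω ∈ seg q n k := hω
    rw [seg, if_neg hk0, if_pos hkn] at hx
    exact hx
  have hpk : 0 < segProb P X q n k := hpos k (by omega)
  have huv : q (k - 1) < q k := by
    have h := hmono (k - 1) (by omega)
    have : k - 1 + 1 = k := by omega
    rwa [this] at h
  have hcb := chord_bound P X hX (A k) (hAm k) (q (k - 1)) (q k) s huv hks1 hks2 hmem hpk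
  have h4k := h4 k (by omega) hkn
  calc |segProb P X q n k * min s (segMean P X q n k) - ∫ ω in A k, min s (X ω) ∂P|
      ≤ segProb P X q n k * (q k - q (k - 1)) / 4 := hcb
    _ ≤ 4 * ε / 4 := by linarith
    _ = ε := by ring

theorem error_bounds_from_interval_bounds {Ω : Type*} [MeasurableSpace Ω]
    (P : Measure Ω) [IsProbabilityMeasure P]
    (X : Ω → ℝ) (hX : Integrable X P)
    (a b : ℝ) (hab : a < b) (n : ℕ) (hn : 1 ≤ n)
    (q : ℕ → ℝ) (hq0 : q 0 = a) (hqn : q n = b)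
    (hmono : ∀ i < n, q i < q (i + 1))
    (hpos : ∀ j ≤ n + 1, 0 < segProb P X q n j)
    (ε : ℝ) (hε : 0 < ε) :
    ((∀ j, 1 ≤ j → j ≤ n → segProb P X q n j * (q j - q (j - 1)) ≤ 4 * ε) →
        ∀ s ∈ Set.Ioc a b, |ftilde P X q n s - ∫ ω, min s (X ω) ∂P| ≤ ε) ∧
      ((∀ j, 1 ≤ j → j ≤ n → segProb P X q n j * (q j - q (j - 1)) ≤ 8 * ε) →
        ∀ s ∈ Set.Ioc a b, |ftilde P X q n s - ∫ ω, min s (X ω) ∂P| ≤ 2 * ε) := by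
  obtain ⟨Y, hYsm, hXY⟩ := hX.aestronglyMeasurable
  have hYm : Measurable Y := hYsm.measurable
  have hY : Integrable Y P := hX.congr hXY
  have hsets : ∀ j, {ω | X ω ∈ seg q n j} =ᵐ[P] {ω | Y ω ∈ seg q n j} := by
    intro j
    filter_upwards [hXY] with ω h
    show (X ω ∈ seg q n j) = (Y ω ∈ seg q n j)
    rw [h]
  have hprob : ∀ j, segProb P X q n j = segProb P Y q n j := by
    intro j
    unfold segProb
    rw [measure_congr (hsets j)]
  have hmean : ∀ j, segMean P X q n j = segMean P Y q n j := by
    intro j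
    unfold segMean
    rw [hprob j]
    congr 1
    rw [Measure.restrict_congr_set (hsets j)]
    exact integral_congr_ae (ae_restrict_of_ae hXY)
  have hft : ∀ s : ℝ, ftilde P X q n s = ftilde P Y q n s := by
    intro s
    unfold ftilde
    exact Finset.sum_congr rfl fun j _ => by rw [hprob j, hmean j]
  have hint : ∀ s : ℝ, ∫ ω, min s (X ω) ∂P = ∫ ω, min s (Y ω) ∂P := fun s =>
    integral_congr_ae (hXY.mono fun ω h => by dsimp only; rw [h])
  have hposY : ∀ j ≤ n + 1, 0 < segProb P Y q n j := fun j hj => hprob j ▸ hpos j hj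
  constructor
  · intro h4 s hs
    rw [hft s, hint s]
    exact key_bound P Y hYm hY a b hab n hn q hq0 hqn hmono hposY ε hε
      (fun j h1 h2 => by rw [← hprob j]; exact h4 j h1 h2) s hs
  · intro h8 s hs
    rw [hft s, hint s]
    exact key_bound P Y hYm hY a b hab n hn q hq0 hqn hmono hposY (2 * ε) (by linarith)
      (fun j h1 h2 => by rw [← hprob j]; linarith [h8 j h1 h2]) s hs
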